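/- arXiv:1812.03528 — 2 statements merged into one kernel-verified Lean document; each statement's English description precedes it below -/
import Mathlib

section
/- For all ε > 0, θ > 0, and all x ∈ ℝ^m, the function Ψ*_{ε,θ}(x) := εθΨ(−x) + Ψ_ε(x) satisfies ε·((1∧θ)/μ_max)·‖x‖₁ − (1+εθ)·(m/2)·(1/μ_min) ≤ Ψ*_{ε,θ}(x) ≤ ε·((1∨θ)/μ_min)·‖x‖₁. -/
open scoped BigOperators

/-- The piecewise function ψ. -/
noncomputable def psiFn (t : ℝ) : ℝ :=
  if t ≤ -1 then -(1/2)
  else if t ≤ 0 then (t+1)^3 - (1/2)*(t+1)^4 - 1/2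
  else t

/-- ψ_ε(t) := ψ(εt). -/
noncomputable def psiE (ε t : ℝ) : ℝ := psiFn (ε * t)

/-- Ψ(x) := Σᵢ ψ(xᵢ)/μᵢ. -/
noncomputable def bigPsi {m : ℕ} (μ : Fin m → ℝ) (x : Fin m → ℝ) : ℝ :=
  ∑ i, psiFn (x i) / μ i

/-- Ψ_ε(x) := Σᵢ ψ_ε(xᵢ)/μᵢ. -/
noncomputable def bigPsiE {m : ℕ} (μ : Fin m → ℝ) (ε : ℝ) (x : Fin m → ℝ) : ℝ :=
  ∑ i, psiE ε (x i) / μ i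

/-- The drift b(x,u) with bᵢ(x,u) = −ρμᵢ/m − μᵢ(xᵢ − ⟨e,x⟩⁺uᵢ) − γᵢ⟨e,x⟩⁺uᵢ. -/
noncomputable def drift {m : ℕ} (ρ : ℝ) (μ γ : Fin m → ℝ) (x u : Fin m → ℝ) :
    Fin m → ℝ :=
  fun i => -(ρ * μ i / m) - μ i * (x i - max (∑ j, x j) 0 * u i)
    - γ i * max (∑ j, x j) 0 * u i

/-- The extended generator L_u f(x) = Σᵢ λ̃ᵢ ∂²f/∂xᵢ²(x) + ⟨b(x,u), ∇f(x)⟩. -/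
noncomputable def genL {m : ℕ} (lam : Fin m → ℝ) (ρ : ℝ) (μ γ : Fin m → ℝ)
    (u : Fin m → ℝ) (f : (Fin m → ℝ) → ℝ) (x : Fin m → ℝ) : ℝ :=
  ∑ i, lam i * fderiv ℝ (fun y => fderiv ℝ f y (Pi.single i 1)) x (Pi.single i 1)
    + fderiv ℝ f x (drift ρ μ γ x u)

/-- ‖x‖₁ = Σᵢ|xᵢ|. -/
noncomputable def norm1 {m : ℕ} (x : Fin m → ℝ) : ℝ := ∑ i, |x i|

/-- ‖x⁻‖₁ = Σᵢ max(−xᵢ,0). -/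
noncomputable def norm1neg {m : ℕ} (x : Fin m → ℝ) : ℝ := ∑ i, max (-(x i)) 0

lemma psiFn_le (t : ℝ) : psiFn t ≤ max t 0 := by
  unfold psiFn
  split_ifs with h1 h2
  · exact le_trans (by norm_num) (le_max_right t 0)
  · refine le_trans ?_ (le_max_right t 0)
    push_neg at h1
    nlinarith [sq_nonneg (t+1), sq_nonneg t, sq_nonneg (t*(t+1)), mul_nonneg (neg_nonneg.2 h2) (by linarith : (0:ℝ) ≤ t+1)]
  · exact le_max_left t 0

lemma psiFn_ge (t : ℝ) : max t 0 - 1/2 ≤ psiFn t := by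
  unfold psiFn
  split_ifs with h1 h2
  · rw [max_eq_right (by linarith)]; norm_num
  · rw [max_eq_right h2]
    push_neg at h1
    nlinarith [sq_nonneg (t+1), mul_nonneg (pow_nonneg (by linarith : (0:ℝ) ≤ t+1) 3) (by linarith : (0:ℝ) ≤ 1 - (t+1)/2)]
  · push_neg at h2
    rw [max_eq_left h2.le]; linarith


lemma abs_split (t : ℝ) : |t| = max t 0 + max (-t) 0 := by
  rcases le_total 0 t with h | h
  · rw [abs_of_nonneg h, max_eq_left h, max_eq_right (by linarith)]; ring
  · rw [abs_of_nonpos h, max_eq_right h, max_eq_left (by linarith)]; ring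

lemma term_lower (ε θ t μi μmin μmax : ℝ) (hε : 0 < ε) (hθ : 0 < θ)
    (h1 : 0 < μmin) (h2 : μmin ≤ μi) (h3 : μi ≤ μmax) :
    ε * (min 1 θ / μmax) * |t| - (1 + ε * θ) * (1/2) * (1/μmin)
      ≤ ε * θ * psiFn (-t) / μi + psiFn (ε * t) / μi := by
  have hμi : 0 < μi := lt_of_lt_of_le h1 h2
  have hμmax : 0 < μmax := lt_of_lt_of_le hμi h3
  set A := max t 0 with hA
  set B := max (-t) 0 with hB
  have hA0 : 0 ≤ A := le_max_right _ _
  have hB0 : 0 ≤ B := le_max_right _ _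
  have hp : B - 1/2 ≤ psiFn (-t) := psiFn_ge (-t)
  have hq : ε * A - 1/2 ≤ psiFn (ε * t) := by
    have := psiFn_ge (ε * t)
    have hm : max (ε * t) 0 = ε * A := by
      rw [hA, eq_comm, mul_max_of_nonneg _ _ hε.le, mul_zero]
    linarith [hm ▸ this]
  have key : (ε * θ * (B - 1/2) + (ε * A - 1/2)) / μi
      ≤ ε * θ * psiFn (-t) / μi + psiFn (ε * t) / μi := by
    rw [add_div, mul_div_assoc, mul_div_assoc]
    gcongr
  have e1 : (ε * θ * (B - 1/2) + (ε * A - 1/2)) / μi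
      = ε * (θ * B + A) / μi - (1 + ε * θ) / 2 / μi := by ring
  have s1 : ε * (min 1 θ) * (A + B) / μmax ≤ ε * (θ * B + A) / μi := by
    apply div_le_div₀ ?_ ?_ hμi h3
    · nlinarith [mul_nonneg (mul_nonneg hε.le hθ.le) hB0, mul_nonneg hε.le hA0]
    · nlinarith [mul_nonneg (mul_nonneg hε.le (sub_nonneg.2 (min_le_right 1 θ))) hB0,
        mul_nonneg (mul_nonneg hε.le (sub_nonneg.2 (min_le_left 1 θ))) hA0]
  have s2 : (1 + ε * θ) / 2 / μi ≤ (1 + ε * θ) / 2 / μmin := by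
    have : (0:ℝ) ≤ (1 + ε * θ) / 2 := by nlinarith
    gcongr
  have habs : |t| = A + B := abs_split t
  rw [habs]
  calc ε * (min 1 θ / μmax) * (A + B) - (1 + ε * θ) * (1/2) * (1/μmin)
      = ε * (min 1 θ) * (A + B) / μmax - (1 + ε * θ) / 2 / μmin := by ring
    _ ≤ ε * (θ * B + A) / μi - (1 + ε * θ) / 2 / μi := by linarith
    _ = (ε * θ * (B - 1/2) + (ε * A - 1/2)) / μi := e1.symm
    _ ≤ _ := key

lemma term_upper (ε θ t μi μmin : ℝ) (hε : 0 < ε) (hθ : 0 < θ)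
    (h1 : 0 < μmin) (h2 : μmin ≤ μi) :
    ε * θ * psiFn (-t) / μi + psiFn (ε * t) / μi ≤ ε * (max 1 θ / μmin) * |t| := by
  have hμi : 0 < μi := lt_of_lt_of_le h1 h2
  set A := max t 0 with hA
  set B := max (-t) 0 with hB
  have hA0 : 0 ≤ A := le_max_right _ _
  have hB0 : 0 ≤ B := le_max_right _ _
  have hp : psiFn (-t) ≤ B := psiFn_le (-t)
  have hq : psiFn (ε * t) ≤ ε * A := by
    have := psiFn_le (ε * t)
    have hm : max (ε * t) 0 = ε * A := by
      rw [hA, eq_comm, mul_max_of_nonneg _ _ hε.le, mul_zero]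
    linarith [hm ▸ this]
  have key : ε * θ * psiFn (-t) / μi + psiFn (ε * t) / μi
      ≤ (ε * θ * B + ε * A) / μi := by
    rw [add_div, mul_div_assoc, mul_div_assoc]
    gcongr
  have s1 : (ε * θ * B + ε * A) / μi ≤ ε * (max 1 θ) * (A + B) / μmin := by
    apply div_le_div₀ ?_ ?_ h1 h2
    · nlinarith [mul_nonneg (mul_nonneg hε.le (le_trans zero_le_one (le_max_left 1 θ)))
        (add_nonneg hA0 hB0)]
    · nlinarith [mul_nonneg (mul_nonneg hε.le (sub_nonneg.2 (le_max_right 1 θ))) hB0,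
        mul_nonneg (mul_nonneg hε.le (sub_nonneg.2 (le_max_left 1 θ))) hA0]
  have habs : |t| = A + B := abs_split t
  rw [habs]
  calc ε * θ * psiFn (-t) / μi + psiFn (ε * t) / μi
      ≤ ε * (max 1 θ) * (A + B) / μmin := le_trans key s1
    _ = ε * (max 1 θ / μmin) * (A + B) := by ring

/-- the two-sided bound
ε((1∧θ)/μ_max)‖x‖₁ − (1+εθ)(m/2)(1/μ_min) ≤ Ψ*_{ε,θ}(x) ≤ ε((1∨θ)/μ_min)‖x‖₁,
where Ψ*_{ε,θ}(x) = εθΨ(−x) + Ψ_ε(x). -/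
theorem stmt1 {m : ℕ} (hm : 1 ≤ m) (μ : Fin m → ℝ) (hμ : ∀ i, 0 < μ i)
    (μmax μmin : ℝ)
    (hμmax : IsGreatest (Set.range μ) μmax) (hμmin : IsLeast (Set.range μ) μmin)
    (ε θ : ℝ) (hε : 0 < ε) (hθ : 0 < θ) (x : Fin m → ℝ) :
    ε * (min 1 θ / μmax) * norm1 x - (1 + ε * θ) * (m / 2) * (1 / μmin)
        ≤ ε * θ * bigPsi μ (-x) + bigPsiE μ ε x ∧
    ε * θ * bigPsi μ (-x) + bigPsiE μ ε x ≤ ε * (max 1 θ / μmin) * norm1 x := by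
  obtain ⟨i0, hi0⟩ := hμmin.1
  have hμmin0 : 0 < μmin := hi0 ▸ hμ i0
  have hle : ∀ i, μmin ≤ μ i := fun i => hμmin.2 ⟨i, rfl⟩
  have hge : ∀ i, μ i ≤ μmax := fun i => hμmax.2 ⟨i, rfl⟩
  have hsum : ε * θ * bigPsi μ (-x) + bigPsiE μ ε x
      = ∑ i, (ε * θ * psiFn (-(x i)) / μ i + psiFn (ε * (x i)) / μ i) := by
    rw [bigPsi, bigPsiE, Finset.mul_sum, ← Finset.sum_add_distrib]
    refine Finset.sum_congr rfl fun i _ => ?_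
    simp only [Pi.neg_apply, psiE]
    ring
  constructor
  · calc ε * (min 1 θ / μmax) * norm1 x - (1 + ε * θ) * (m / 2) * (1 / μmin)
        = ∑ i : Fin m, (ε * (min 1 θ / μmax) * |x i| - (1 + ε * θ) * (1/2) * (1/μmin)) := by
          rw [Finset.sum_sub_distrib, ← Finset.mul_sum, Finset.sum_const,
            Finset.card_univ, Fintype.card_fin, nsmul_eq_mul, norm1]
          ring
      _ ≤ ∑ i, (ε * θ * psiFn (-(x i)) / μ i + psiFn (ε * (x i)) / μ i) :=
          Finset.sum_le_sum fun i _ =>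
            term_lower ε θ (x i) (μ i) μmin μmax hε hθ hμmin0 (hle i) (hge i)
      _ = _ := hsum.symm
  · calc ε * θ * bigPsi μ (-x) + bigPsiE μ ε x
        = ∑ i, (ε * θ * psiFn (-(x i)) / μ i + psiFn (ε * (x i)) / μ i) := hsum
      _ ≤ ∑ i : Fin m, ε * (max 1 θ / μmin) * |x i| :=
          Finset.sum_le_sum fun i _ =>
            term_upper ε θ (x i) (μ i) μmin hε hθ hμmin0 (hle i)
      _ = ε * (max 1 θ / μmin) * norm1 x := by rw [norm1, ← Finset.mul_sum]
end

section
/- For every ε > 0 and all x ∈ ℝ^m: Σᵢ ψ_ε′(xᵢ)·xᵢ ≥ ε‖x⁺‖₁ − m/2 and −Σᵢ ψ′(−xᵢ)·xᵢ ≥ ‖x⁻‖₁ − m/2. -/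
open scoped BigOperators

noncomputable def psiD (t : ℝ) : ℝ :=
  if t ≤ -1 then 0 else if t ≤ 0 then 3*(t+1)^2 - 2*(t+1)^3 else 1

lemma hasDerivAt_poly (t : ℝ) :
    HasDerivAt (fun s : ℝ => (s+1)^3 - (1/2)*(s+1)^4 - 1/2)
      (3*(t+1)^2 - 2*(t+1)^3) t := by
  have h1 : HasDerivAt (fun s : ℝ => s + 1) 1 t := (hasDerivAt_id t).add_const 1
  have h3 := h1.pow 3
  have h4 := (h1.pow 4).const_mul (1/2 : ℝ)
  have := (h3.sub h4).sub_const (1/2 : ℝ)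
  exact this.congr_deriv (by norm_num <;> ring)

lemma key_ineq (t : ℝ) : psiD t * t ≥ max t 0 - 1/2 := by
  unfold psiD
  split_ifs with h1 h2
  · rw [max_eq_right (by linarith)]; simp
  · push_neg at h1
    rw [max_eq_right h2]
    nlinarith [sq_nonneg (t+1), sq_nonneg t, sq_nonneg ((t+1)^2 - 1/2), mul_nonneg (by linarith : (0:ℝ) ≤ t+1) (by linarith : (0:ℝ) ≤ -t), sq_nonneg ((t+1)*t)]
  · push_neg at h2
    rw [max_eq_left h2.le]; linarith

lemma hasDerivAt_psiFn (t : ℝ) : HasDerivAt psiFn (psiD t) t := by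
  rcases lt_trichotomy t (-1) with h | h | h
  · -- t < -1 : locally constant
    have hev : psiFn =ᶠ[nhds t] fun _ => -(1/2 : ℝ) := by
      filter_upwards [Iio_mem_nhds h] with y hy
      have : y < -1 := hy
      simp only [psiFn, if_pos this.le]
    have : HasDerivAt (fun _ : ℝ => -(1/2 : ℝ)) 0 t := hasDerivAt_const t _
    have := this.congr_of_eventuallyEq hev
    simpa [psiD, h.le] using this
  · -- t = -1
    subst h
    have hIic : HasDerivWithinAt psiFn 0 (Set.Iic (-1 : ℝ)) (-1) := by
      have : HasDerivWithinAt (fun _ : ℝ => -(1/2 : ℝ)) 0 (Set.Iic (-1 : ℝ)) (-1) :=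
        (hasDerivAt_const _ _).hasDerivWithinAt
      refine this.congr (fun y hy => ?_) (by simp [psiFn])
      have : y ≤ -1 := hy
      simp only [psiFn, if_pos this]
    have hIcc : HasDerivWithinAt psiFn 0 (Set.Icc (-1 : ℝ) 0) (-1) := by
      have h0 := (hasDerivAt_poly (-1)).hasDerivWithinAt (s := Set.Icc (-1 : ℝ) 0)
      have h0' : HasDerivWithinAt (fun s : ℝ => (s+1)^3 - (1/2)*(s+1)^4 - 1/2) 0
          (Set.Icc (-1 : ℝ) 0) (-1) := by simpa using h0
      refine h0'.congr (fun y hy => ?_) (by norm_num [psiFn])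
      rcases eq_or_lt_of_le hy.1 with h1 | h1
      · simp [psiFn, ← h1]
      · simp [psiFn, not_le.mpr h1, hy.2]
    have hu := hIic.union hIcc
    refine hu.hasDerivAt ?_ |>.congr_deriv ?_
    · have : Set.Ioo (-2 : ℝ) 0 ⊆ Set.Iic (-1) ∪ Set.Icc (-1) 0 := by
        intro y hy
        rcases le_or_gt y (-1) with h | h
        · exact Or.inl h
        · exact Or.inr ⟨h.le, hy.2.le⟩
      exact Filter.mem_of_superset (Ioo_mem_nhds (by norm_num) (by norm_num)) this
    · simp [psiD]
  · rcases lt_trichotomy t 0 with h0 | h0 | h0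
    · -- -1 < t < 0
      have hev : psiFn =ᶠ[nhds t] fun s => (s+1)^3 - (1/2)*(s+1)^4 - 1/2 := by
        filter_upwards [Ioo_mem_nhds h h0] with y hy
        simp [psiFn, not_le.mpr hy.1, hy.2.le]
      have := (hasDerivAt_poly t).congr_of_eventuallyEq hev
      simpa [psiD, not_le.mpr h, h0.le] using this
    · -- t = 0
      subst h0
      have hIic : HasDerivWithinAt psiFn 1 (Set.Icc (-1 : ℝ) 0) 0 := by
        have h0 := (hasDerivAt_poly 0).hasDerivWithinAt (s := Set.Icc (-1 : ℝ) 0)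
        have h0' : HasDerivWithinAt (fun s : ℝ => (s+1)^3 - (1/2)*(s+1)^4 - 1/2) 1
            (Set.Icc (-1 : ℝ) 0) 0 := h0.congr_deriv (by norm_num)
        refine h0'.congr (fun y hy => ?_) (by norm_num [psiFn])
        rcases eq_or_lt_of_le hy.1 with h1 | h1
        · rw [← h1]; norm_num [psiFn]
        · simp [psiFn, not_le.mpr h1, hy.2]
      have hIci : HasDerivWithinAt psiFn 1 (Set.Ici (0 : ℝ)) 0 := by
        have : HasDerivWithinAt (fun s : ℝ => s) 1 (Set.Ici (0 : ℝ)) 0 :=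
          (hasDerivAt_id 0).hasDerivWithinAt
        refine this.congr (fun y hy => ?_) (by norm_num [psiFn])
        have hy0 : (0:ℝ) ≤ y := hy
        rcases eq_or_lt_of_le hy0 with h1 | h1
        · rw [← h1]; norm_num [psiFn]
        · simp [psiFn, not_le.mpr (by linarith : (-1:ℝ) < y), not_le.mpr h1]
      have hu := hIic.union hIci
      refine hu.hasDerivAt ?_ |>.congr_deriv ?_
      · have : Set.Ioo (-1 : ℝ) 1 ⊆ Set.Icc (-1) 0 ∪ Set.Ici 0 := by
          intro y hy
          rcases le_or_gt y 0 with h | h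
          · exact Or.inl ⟨hy.1.le, h⟩
          · exact Or.inr h.le
        exact Filter.mem_of_superset (Ioo_mem_nhds (by norm_num) (by norm_num)) this
      · norm_num [psiD]
    · -- t > 0
      have hev : psiFn =ᶠ[nhds t] fun s => s := by
        filter_upwards [Ioi_mem_nhds h0] with y hy
        have hy0 : (0:ℝ) < y := hy
        simp [psiFn, not_le.mpr (by linarith : (-1:ℝ) < y), not_le.mpr hy0]
      have := (hasDerivAt_id t).congr_of_eventuallyEq hev
      simpa [psiD, not_le.mpr h, not_le.mpr h0] using this

lemma deriv_psiFn (t : ℝ) : deriv psiFn t = psiD t := (hasDerivAt_psiFn t).deriv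

lemma deriv_psiE (ε : ℝ) (t : ℝ) : deriv (fun s => psiFn (ε * s)) t = psiD (ε * t) * ε := by
  have h1 : HasDerivAt (fun s : ℝ => ε * s) ε t := by
    simpa using (hasDerivAt_id t).const_mul ε
  exact ((hasDerivAt_psiFn (ε * t)).comp t h1).deriv


/-- Σᵢ ψ_ε′(xᵢ)xᵢ ≥ ε‖x⁺‖₁ − m/2 and −Σᵢ ψ′(−xᵢ)xᵢ ≥ ‖x⁻‖₁ − m/2. -/
theorem stmt2 {m : ℕ} (hm : 1 ≤ m) (ε : ℝ) (hε : 0 < ε) (x : Fin m → ℝ) :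
    (∑ i, deriv (psiE ε) (x i) * x i ≥ ε * (∑ i, max (x i) 0) - m / 2) ∧
    (-∑ i, deriv psiFn (-(x i)) * x i ≥ (∑ i, max (-(x i)) 0) - m / 2) := by
  have hpe : psiE ε = fun t => psiFn (ε * t) := rfl
  constructor
  · have key : ∀ i, deriv (psiE ε) (x i) * x i ≥ ε * max (x i) 0 - 1/2 := by
      intro i
      rw [hpe, deriv_psiE]
      have h := key_ineq (ε * x i)
      have hmax : max (ε * x i) 0 = ε * max (x i) 0 := by
        rw [mul_max_of_nonneg _ _ hε.le, mul_zero]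
      calc psiD (ε * x i) * ε * x i = psiD (ε * x i) * (ε * x i) := by ring
        _ ≥ max (ε * x i) 0 - 1/2 := h
        _ = ε * max (x i) 0 - 1/2 := by rw [hmax]
    calc ∑ i, deriv (psiE ε) (x i) * x i
        ≥ ∑ i, (ε * max (x i) 0 - 1/2) := Finset.sum_le_sum (fun i _ => key i)
      _ = ε * (∑ i, max (x i) 0) - m / 2 := by
          rw [Finset.sum_sub_distrib, ← Finset.mul_sum]
          simp
          ring
  · have key : ∀ i, deriv psiFn (-(x i)) * (-(x i)) ≥ max (-(x i)) 0 - 1/2 := by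
      intro i
      rw [deriv_psiFn]
      exact key_ineq _
    calc -∑ i, deriv psiFn (-(x i)) * x i
        = ∑ i, deriv psiFn (-(x i)) * (-(x i)) := by
          rw [← Finset.sum_neg_distrib]; congr 1; ext i; ring
      _ ≥ ∑ i, (max (-(x i)) 0 - 1/2) := Finset.sum_le_sum (fun i _ => key i)
      _ = (∑ i, max (-(x i)) 0) - m / 2 := by
          rw [Finset.sum_sub_distrib]
          simp
          ring
end
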